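/- Let A be an invertible real N×N matrix with polar decomposition A = QP (Q orthogonal, P symmetric positive definite). Define the iteration Q₀ := A, Q_{k+1} := (Q_k + Q_k^{-T})/2. Then each Q_k is invertible, the sequence (Q_k) converges to Q, and the convergence is quadratic. -/

import Mathlib

open scoped Matrix
attribute [local instance] Matrix.frobeniusNormedAddCommGroup

namespace PolarNewtonAux

noncomputable def ns (x : ℝ) : ℝ := (2:ℝ)⁻¹ * (x + x⁻¹)

lemma ns_eq {x : ℝ} (hx : x ≠ 0) : ns x = 1 + (x - 1)^2 / (2*x) := by
  unfold ns; field_simp; ring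

lemma ns_pos {x : ℝ} (hx : 0 < x) : 0 < ns x := by
  unfold ns; positivity

lemma ns_ge_one {x : ℝ} (hx : 0 < x) : 1 ≤ ns x := by
  rw [ns_eq hx.ne']
  have : 0 ≤ (x - 1)^2 / (2*x) := by positivity
  linarith

lemma ns_quad {x m : ℝ} (hm : 0 < m) (hmx : m ≤ x) :
    |ns x - 1| ≤ (2*m)⁻¹ * (x - 1)^2 := by
  have hx : 0 < x := lt_of_lt_of_le hm hmx
  rw [ns_eq hx.ne', add_sub_cancel_left, abs_of_nonneg (by positivity)]
  rw [div_le_iff₀ (by positivity), inv_mul_eq_div, div_mul_eq_mul_div,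
    le_div_iff₀ (by positivity)]
  nlinarith [sq_nonneg (x - 1)]

lemma ns_half {x : ℝ} (hx : 1 ≤ x) : ns x - 1 ≤ (x - 1)/2 := by
  have hx0 : (0:ℝ) < x := lt_of_lt_of_le one_pos hx
  rw [ns_eq hx0.ne', add_sub_cancel_left, div_le_div_iff₀ (by positivity) (by norm_num)]
  nlinarith

lemma iter_pos {x : ℝ} (hx : 0 < x) : ∀ k, 0 < ns^[k] x := by
  intro k; induction k with
  | zero => simpa using hx
  | succ k ih => rw [Function.iterate_succ_apply']; exact ns_pos ih

lemma iter_ge_min {x : ℝ} (hx : 0 < x) : ∀ k, min x 1 ≤ ns^[k] x := by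
  intro k; induction k with
  | zero => simpa using min_le_left x 1
  | succ k ih =>
    rw [Function.iterate_succ_apply']
    exact le_trans (min_le_right x 1) (ns_ge_one (iter_pos hx k))

lemma ns_tendsto {x : ℝ} (hx : 0 < x) :
    Filter.Tendsto (fun k => ns^[k] x) Filter.atTop (nhds 1) := by
  have hpos : ∀ k, 0 < ns^[k] x := iter_pos hx
  have hge : ∀ k, 1 ≤ ns^[k+1] x := by
    intro k; rw [Function.iterate_succ_apply']; exact ns_ge_one (hpos k)
  have hdecay : ∀ k, ns^[k+1] x - 1 ≤ (ns x - 1) * (1/2)^k := by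
    intro k; induction k with
    | zero => simp
    | succ k ih =>
      have h1 : ns^[k+1+1] x - 1 ≤ (ns^[k+1] x - 1)/2 := by
        rw [Function.iterate_succ_apply']; exact ns_half (hge k)
      calc ns^[k+1+1] x - 1 ≤ (ns^[k+1] x - 1)/2 := h1
        _ ≤ ((ns x - 1) * (1/2)^k)/2 := by linarith
        _ = (ns x - 1) * (1/2)^(k+1) := by ring
  have h1 : Filter.Tendsto (fun k => ns^[k+1] x) Filter.atTop (nhds 1) := by
    have hub : Filter.Tendsto (fun k : ℕ => 1 + (ns x - 1) * (1/2)^k)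
        Filter.atTop (nhds (1 + (ns x - 1) * 0)) :=
      (tendsto_const_nhds.add (tendsto_const_nhds.mul
        (tendsto_pow_atTop_nhds_zero_of_lt_one (by norm_num) (by norm_num))))
    rw [mul_zero, add_zero] at hub
    refine tendsto_of_tendsto_of_tendsto_of_le_of_le tendsto_const_nhds hub hge ?_
    intro k
    have := hdecay k
    linarith
  exact (Filter.tendsto_add_atTop_iff_nat 1).mp h1

lemma pi_bound {n : ℕ} (a b : Fin n → ℝ) (c : ℝ) (hc : 0 ≤ c)
    (h : ∀ i, |a i| ≤ c * (b i)^2) :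
    ‖(WithLp.equiv 2 (Fin n → ℝ)).symm a‖ ≤ c * ‖(WithLp.equiv 2 (Fin n → ℝ)).symm b‖^2 := by
  have ha : ‖(WithLp.equiv 2 (Fin n → ℝ)).symm a‖ = Real.sqrt (∑ i, a i ^ 2) := by
    rw [EuclideanSpace.norm_eq]
    simp [Real.norm_eq_abs, sq_abs]
  have hb : ‖(WithLp.equiv 2 (Fin n → ℝ)).symm b‖ = Real.sqrt (∑ i, b i ^ 2) := by
    rw [EuclideanSpace.norm_eq]
    simp [Real.norm_eq_abs, sq_abs]
  rw [ha, hb, Real.sq_sqrt (by positivity)]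
  have key : ∑ i, a i ^ 2 ≤ (c * ∑ i, b i ^ 2)^2 := by
    calc ∑ i, a i ^ 2 ≤ ∑ i, (c * (b i)^2)^2 := by
          refine Finset.sum_le_sum fun i _ => ?_
          have h1 := h i
          calc a i ^ 2 = |a i|^2 := (sq_abs _).symm
            _ ≤ (c * (b i)^2)^2 := by
              apply pow_le_pow_left₀ (abs_nonneg _) h1
      _ = c^2 * ∑ i, ((b i)^2)^2 := by rw [Finset.mul_sum]; congr 1; funext i; ring
      _ ≤ c^2 * (∑ i, (b i)^2)^2 := by
          gcongr
          exact Finset.sum_sq_le_sq_sum_of_nonneg fun i _ => sq_nonneg _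
      _ = (c * ∑ i, b i ^ 2)^2 := by ring
  calc Real.sqrt (∑ i, a i ^ 2) ≤ Real.sqrt ((c * ∑ i, b i ^ 2)^2) := Real.sqrt_le_sqrt key
    _ = c * ∑ i, b i ^ 2 := Real.sqrt_sq (by positivity)

lemma norm3 {n : ℕ} (A B C : Matrix (Fin n) (Fin n) ℝ) :
    ‖A * B * C‖ ≤ ‖A‖ * ‖B‖ * ‖C‖ :=
  calc ‖A * B * C‖ ≤ ‖A * B‖ * ‖C‖ := Matrix.frobenius_norm_mul _ _
    _ ≤ ‖A‖ * ‖B‖ * ‖C‖ :=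
      mul_le_mul_of_nonneg_right (Matrix.frobenius_norm_mul _ _) (norm_nonneg _)

end PolarNewtonAux

open PolarNewtonAux Matrix Filter

/-- Higham's iteration for the polar decomposition: let `A` be invertible with polar
decomposition `A = QP` (`Q` orthogonal, `P` symmetric positive definite), and define
`Q₀ = A`, `Q_{k+1} = (Q_k + Q_k^{-T})/2`.  Then every `Q_k` is invertible, the sequence
converges to the polar factor `Q`, and the convergence is quadratic. -/
theorem polar_newton_iteration_quadratic_convergence
    {N : ℕ} (A Q P : Matrix (Fin N) (Fin N) ℝ)
    (hA : IsUnit A.det)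
    (hQ : Q ∈ Matrix.orthogonalGroup (Fin N) ℝ)
    (hP : P.PosDef)
    (hQP : A = Q * P)
    (Qseq : ℕ → Matrix (Fin N) (Fin N) ℝ)
    (hQ0 : Qseq 0 = A)
    (hrec : ∀ k, Qseq (k + 1) = (2 : ℝ)⁻¹ • (Qseq k + ((Qseq k)⁻¹)ᵀ)) :
    (∀ k, IsUnit (Qseq k).det) ∧
    Filter.Tendsto Qseq Filter.atTop (nhds Q) ∧
    ∃ C : ℝ, 0 < C ∧ ∀ k, ‖Qseq (k + 1) - Q‖ ≤ C * ‖Qseq k - Q‖ ^ 2 := by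
  classical
  have hH : P.IsHermitian := hP.isHermitian
  set U : Matrix (Fin N) (Fin N) ℝ := (hH.eigenvectorUnitary : Matrix (Fin N) (Fin N) ℝ) with hUdef
  set lam : Fin N → ℝ := hH.eigenvalues with hlam
  have hlampos : ∀ i, 0 < lam i := fun i => hP.eigenvalues_pos i
  have hst : ∀ (M : Matrix (Fin N) (Fin N) ℝ), star M = Mᵀ := fun M =>
    (Matrix.star_eq_conjTranspose M).trans (Matrix.conjTranspose_eq_transpose_of_trivial M)
  have hUU : Uᵀ * U = 1 := by
    have := Matrix.mem_unitaryGroup_iff'.mp (hH.eigenvectorUnitary).2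
    rwa [hst] at this
  have hUU' : U * Uᵀ = 1 := by
    have := Matrix.mem_unitaryGroup_iff.mp (hH.eigenvectorUnitary).2
    rwa [hst] at this
  have hQQ : Qᵀ * Q = 1 := by
    have := Matrix.mem_unitaryGroup_iff'.mp hQ
    rwa [hst] at this
  have hQQ' : Q * Qᵀ = 1 := by
    have := Matrix.mem_unitaryGroup_iff.mp hQ
    rwa [hst] at this
  set d : ℕ → Fin N → ℝ := fun k i => ns^[k] (lam i) with hd
  have hdpos : ∀ k i, 0 < d k i := fun k i => iter_pos (hlampos i) k
  have hdrec : ∀ k i, d (k+1) i = ns (d k i) := fun k i =>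
    Function.iterate_succ_apply' ns k (lam i)
  have hPspec : P = U * diagonal lam * Uᵀ := by
    have h := hH.spectral_theorem
    rwa [Unitary.conjStarAlgAut_apply, hst, RCLike.ofReal_real_eq_id, Function.id_comp] at h
  have rep : ∀ k, Qseq k = Q * U * diagonal (d k) * Uᵀ := by
    intro k; induction k with
    | zero =>
      rw [hQ0, hQP, hPspec]
      have : d 0 = lam := funext fun i => rfl
      rw [this, Matrix.mul_assoc, Matrix.mul_assoc, Matrix.mul_assoc]
    | succ k ih =>
      have hD : diagonal (d k) * diagonal (fun i => (d k i)⁻¹) = 1 := by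
        rw [Matrix.diagonal_mul_diagonal,
          show (fun i => d k i * (d k i)⁻¹) = fun _ : Fin N => (1:ℝ) from
            funext fun i => mul_inv_cancel₀ (hdpos k i).ne', Matrix.diagonal_one]
      have hone : (Q * U * diagonal (d k) * Uᵀ) *
          (U * diagonal (fun i => (d k i)⁻¹) * Uᵀ * Qᵀ) = 1 := by
        simp only [Matrix.mul_assoc]
        rw [← Matrix.mul_assoc Uᵀ U, hUU, Matrix.one_mul,
          ← Matrix.mul_assoc (diagonal (d k)), hD, Matrix.one_mul,
          ← Matrix.mul_assoc U Uᵀ, hUU', Matrix.one_mul, hQQ']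
      have hinv : (Qseq k)⁻¹ = U * diagonal (fun i => (d k i)⁻¹) * Uᵀ * Qᵀ := by
        apply Matrix.inv_eq_right_inv
        rw [ih]; exact hone
      have htr : ((Qseq k)⁻¹)ᵀ = Q * U * diagonal (fun i => (d k i)⁻¹) * Uᵀ := by
        rw [hinv]
        simp [Matrix.transpose_mul, Matrix.diagonal_transpose, Matrix.mul_assoc]
      have hdiag : diagonal (d (k+1)) =
          (2:ℝ)⁻¹ • (diagonal (d k) + diagonal fun i => (d k i)⁻¹) := by
        rw [Matrix.diagonal_add, ← Matrix.diagonal_smul]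
        exact congrArg Matrix.diagonal (funext fun i => by
          rw [hdrec k i]; simp [ns, Pi.smul_apply, smul_eq_mul])
      rw [hrec k, htr, ih, hdiag]
      simp only [Matrix.mul_add, Matrix.add_mul, Matrix.mul_smul, Matrix.smul_mul]
  -- units
  have hunits : ∀ k, IsUnit (Qseq k).det := by
    intro k
    apply Matrix.isUnit_det_of_right_inverse (B := U * diagonal (fun i => (d k i)⁻¹) * Uᵀ * Qᵀ)
    rw [rep k]
    have hD : diagonal (d k) * diagonal (fun i => (d k i)⁻¹) = 1 := by
      rw [Matrix.diagonal_mul_diagonal,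
        show (fun i => d k i * (d k i)⁻¹) = fun _ : Fin N => (1:ℝ) from
          funext fun i => mul_inv_cancel₀ (hdpos k i).ne', Matrix.diagonal_one]
    simp only [Matrix.mul_assoc]
    rw [← Matrix.mul_assoc Uᵀ U, hUU, Matrix.one_mul,
      ← Matrix.mul_assoc (diagonal (d k)), hD, Matrix.one_mul,
      ← Matrix.mul_assoc U Uᵀ, hUU', Matrix.one_mul, hQQ']
  refine ⟨hunits, ?_, ?_⟩
  -- tendsto
  · have hcont : Continuous (fun v : Fin N → ℝ => Q * U * diagonal v * Uᵀ) :=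
      ((continuous_const.matrix_mul continuous_id.matrix_diagonal).matrix_mul continuous_const)
    have hdt : Tendsto d atTop (nhds fun _ => (1:ℝ)) :=
      tendsto_pi_nhds.mpr fun i => ns_tendsto (hlampos i)
    have h1 : Tendsto (fun k => Q * U * diagonal (d k) * Uᵀ) atTop
        (nhds (Q * U * diagonal (fun _ => (1:ℝ)) * Uᵀ)) :=
      (hcont.tendsto _).comp hdt
    have h2 : Q * U * diagonal (fun _ : Fin N => (1:ℝ)) * Uᵀ = Q := by
      rw [Matrix.diagonal_one, Matrix.mul_one, Matrix.mul_assoc, hUU', Matrix.mul_one]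
    rw [h2] at h1
    have : Qseq = fun k => Q * U * diagonal (d k) * Uᵀ := funext rep
    rwa [this]
  -- quadratic
  · have hsub : ∀ k, Qseq k - Q = (Q * U) * diagonal (fun i => d k i - 1) * Uᵀ := by
      intro k
      have hQ' : Q = Q * U * diagonal (fun _ : Fin N => (1:ℝ)) * Uᵀ := by
        rw [Matrix.diagonal_one, Matrix.mul_one, Matrix.mul_assoc, hUU', Matrix.mul_one]
      calc Qseq k - Q = Q * U * diagonal (d k) * Uᵀ
            - Q * U * diagonal (fun _ : Fin N => (1:ℝ)) * Uᵀ := by rw [← rep k, ← hQ']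
        _ = (Q * U) * (diagonal (d k) - diagonal (fun _ => (1:ℝ))) * Uᵀ := by
            rw [Matrix.mul_sub, Matrix.sub_mul]
        _ = (Q * U) * diagonal (fun i => d k i - 1) * Uᵀ := by
            rw [← Matrix.diagonal_sub]
    have hrev : ∀ k, diagonal (fun i => d k i - 1) = (Uᵀ * Qᵀ) * (Qseq k - Q) * U := by
      intro k
      rw [hsub k]
      simp only [Matrix.mul_assoc]
      rw [← Matrix.mul_assoc Qᵀ Q, hQQ, Matrix.one_mul,
        ← Matrix.mul_assoc Uᵀ U, hUU, Matrix.one_mul, Matrix.mul_one]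
    set c : ℝ := 1 + ∑ i, (2 * min (lam i) 1)⁻¹ with hc
    have hterm : ∀ i : Fin N, (0:ℝ) ≤ (2 * min (lam i) 1)⁻¹ := by
      intro i
      have : 0 < min (lam i) 1 := lt_min (hlampos i) one_pos
      positivity
    have hcpos : 0 < c := by
      have h0 : 0 ≤ ∑ i, (2 * min (lam i) 1)⁻¹ := Finset.sum_nonneg fun i _ => hterm i
      rw [hc]; linarith
    have hentry : ∀ k i, |d (k+1) i - 1| ≤ c * (d k i - 1)^2 := by
      intro k i
      have hmi : 0 < min (lam i) 1 := lt_min (hlampos i) one_pos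
      have hge : min (lam i) 1 ≤ d k i := iter_ge_min (hlampos i) k
      have h1 : |d (k+1) i - 1| ≤ (2 * min (lam i) 1)⁻¹ * (d k i - 1)^2 := by
        rw [hdrec k i]; exact ns_quad hmi hge
      have h2 : (2 * min (lam i) 1)⁻¹ ≤ c := by
        have := Finset.single_le_sum (f := fun i => (2 * min (lam i) 1)⁻¹)
          (fun j _ => hterm j) (Finset.mem_univ i)
        rw [hc]; linarith
      calc |d (k+1) i - 1| ≤ (2 * min (lam i) 1)⁻¹ * (d k i - 1)^2 := h1
        _ ≤ c * (d k i - 1)^2 := mul_le_mul_of_nonneg_right h2 (sq_nonneg _)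
    have hdnorm : ∀ k, ‖diagonal (fun i => d (k+1) i - 1)‖ ≤
        c * ‖diagonal (fun i => d k i - 1)‖^2 := by
      intro k
      rw [Matrix.frobenius_norm_diagonal, Matrix.frobenius_norm_diagonal]
      exact pi_bound _ _ c hcpos.le (hentry k)
    set K₁ : ℝ := ‖Q * U‖ * ‖Uᵀ‖ with hK₁
    set K₂ : ℝ := ‖Uᵀ * Qᵀ‖ * ‖U‖ with hK₂
    have hK₁0 : 0 ≤ K₁ := mul_nonneg (norm_nonneg _) (norm_nonneg _)
    have hK₂0 : 0 ≤ K₂ := mul_nonneg (norm_nonneg _) (norm_nonneg _)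
    have hC0 : 0 ≤ K₁ * c * K₂^2 := mul_nonneg (mul_nonneg hK₁0 hcpos.le) (sq_nonneg _)
    refine ⟨1 + K₁ * c * K₂^2, by linarith, fun k => ?_⟩
    have hA1 : ‖Qseq (k+1) - Q‖ ≤ K₁ * ‖diagonal (fun i => d (k+1) i - 1)‖ := by
      rw [hsub (k+1)]
      calc ‖(Q * U) * diagonal (fun i => d (k+1) i - 1) * Uᵀ‖
          ≤ ‖Q * U‖ * ‖diagonal (fun i => d (k+1) i - 1)‖ * ‖Uᵀ‖ := norm3 _ _ _
        _ = K₁ * ‖diagonal (fun i => d (k+1) i - 1)‖ := by rw [hK₁]; ring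
    have hA2 : ‖diagonal (fun i => d k i - 1)‖ ≤ K₂ * ‖Qseq k - Q‖ := by
      rw [hrev k]
      calc ‖(Uᵀ * Qᵀ) * (Qseq k - Q) * U‖ ≤ ‖Uᵀ * Qᵀ‖ * ‖Qseq k - Q‖ * ‖U‖ := norm3 _ _ _
        _ = K₂ * ‖Qseq k - Q‖ := by rw [hK₂]; ring
    calc ‖Qseq (k+1) - Q‖ ≤ K₁ * ‖diagonal (fun i => d (k+1) i - 1)‖ := hA1
      _ ≤ K₁ * (c * ‖diagonal (fun i => d k i - 1)‖^2) :=
          mul_le_mul_of_nonneg_left (hdnorm k) hK₁0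
      _ ≤ K₁ * (c * (K₂ * ‖Qseq k - Q‖)^2) :=
          mul_le_mul_of_nonneg_left (mul_le_mul_of_nonneg_left
            (pow_le_pow_left₀ (norm_nonneg _) (hA2) 2) hcpos.le) hK₁0
      _ = (K₁ * c * K₂^2) * ‖Qseq k - Q‖^2 := by ring
      _ ≤ (1 + K₁ * c * K₂^2) * ‖Qseq k - Q‖^2 :=
          mul_le_mul_of_nonneg_right (by linarith) (sq_nonneg _)
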